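/- Let d ≥ 1, let Ω ⊆ ℝ^d be a bounded open set, and let q : ℝ^d → ℝ be a C² function with compact support contained in Ω. Let f : ℝ^d → ℝ^d be C¹ and D : ℝ^d → ℝ^{d×d} be C², and suppose: (i) ∑_{i,j} D_{ij}(x) ξ_i ξ_j ≥ C_D |ξ|² for all x ∈ Ω and ξ ∈ ℝ^d, where C_D > 0; (ii) ∫_Ω u² dx ≤ C_P ∫_Ω |∇u|² dx for every C¹ function u compactly supported in Ω, where C_P > 0. Then, with b_i = (1/2) ∑_{j=1}^d ∂_{x_j} D_{ij} − f_i and ℒq = −∑_{i=1}^d ∂_{x_i}(f_i q) + (1/2) ∑_{i,j=1}^d ∂_{x_i}∂_{x_j}(D_{ij} q), one has ∫_Ω q(x)² ( C_D/C_P − (∇·b)(x) ) dx ≤ −2 ∫_Ω (ℒq)(x) q(x) dx. -/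

import Mathlib

open MeasureTheory

/-- Partial derivative in the `i`-th coordinate direction. -/
noncomputable def pd {d : ℕ} (i : Fin d) (g : (Fin d → ℝ) → ℝ) : (Fin d → ℝ) → ℝ :=
  fun x => fderiv ℝ g x (Pi.single i 1)

variable {d : ℕ}

lemma contDiff_pd {n : ℕ} {g : (Fin d → ℝ) → ℝ} (hg : ContDiff ℝ (n + 1) g) (i : Fin d) :
    ContDiff ℝ n (pd i g) := by
  have h1 : ContDiff ℝ n (fderiv ℝ g) := hg.fderiv_right (by exact_mod_cast le_rfl)
  exact (ContinuousLinearMap.apply ℝ ℝ (Pi.single i 1)).contDiff.comp h1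

lemma contDiff_pd_one {g : (Fin d → ℝ) → ℝ} (hg : ContDiff ℝ 2 g) (i : Fin d) :
    ContDiff ℝ 1 (pd i g) := by
  exact contDiff_pd (n := 1) (by exact_mod_cast hg) i

lemma cont_pd {g : (Fin d → ℝ) → ℝ} (hg : ContDiff ℝ 1 g) (i : Fin d) :
    Continuous (pd i g) := by
  exact (contDiff_pd (n := 0) (by exact_mod_cast hg) i).continuous

lemma hcs_pd {g : (Fin d → ℝ) → ℝ} (hg : HasCompactSupport g) (i : Fin d) :
    HasCompactSupport (pd i g) :=
  (hg.fderiv ℝ).comp_left (g := fun L : (Fin d → ℝ) →L[ℝ] ℝ => L (Pi.single i 1)) rfl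

lemma pd_eq_zero {g : (Fin d → ℝ) → ℝ} (i : Fin d) {x : Fin d → ℝ}
    (hx : x ∉ tsupport g) : pd i g x = 0 := by
  have : fderiv ℝ g x = 0 := by
    by_contra h
    exact hx (support_fderiv_subset ℝ (by simpa [Function.mem_support] using h))
  simp [pd, this]

lemma pd_mul {u v : (Fin d → ℝ) → ℝ} (hu : Differentiable ℝ u) (hv : Differentiable ℝ v)
    (i : Fin d) (x : Fin d → ℝ) :
    pd i (fun y => u y * v y) x = pd i u x * v x + u x * pd i v x := by
  simp only [pd]
  rw [fderiv_fun_mul (hu x) (hv x)]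
  simp only [ContinuousLinearMap.add_apply, ContinuousLinearMap.smul_apply, smul_eq_mul]
  ring

lemma integrable_ccs {h : (Fin d → ℝ) → ℝ} (hc : Continuous h) (hs : HasCompactSupport h) :
    Integrable h :=
  hc.integrable_of_hasCompactSupport hs

lemma ibp {u v : (Fin d → ℝ) → ℝ} (hu : ContDiff ℝ 1 u) (hv : ContDiff ℝ 1 v)
    (hcu : HasCompactSupport u) (i : Fin d) :
    ∫ x, u x * pd i v x = - ∫ x, pd i u x * v x := by
  apply integral_mul_fderiv_eq_neg_fderiv_mul_of_integrable
  · exact integrable_ccs ((cont_pd hu i).mul hv.continuous) ((hcs_pd hcu i).mul_right)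
  · exact integrable_ccs (hu.continuous.mul (cont_pd hv i)) (hcu.mul_right)
  · exact integrable_ccs (hu.continuous.mul hv.continuous) (hcu.mul_right)
  · exact fun x _ => hu.differentiable one_ne_zero x
  · exact fun x _ => hv.differentiable one_ne_zero x

/-- The Fokker-Planck operator `ℒq = -∑ᵢ ∂ᵢ(fᵢ q) + (1/2) ∑ᵢⱼ ∂ᵢ∂ⱼ(Dᵢⱼ q)`. -/
noncomputable def fokkerPlanck {d : ℕ} (f : (Fin d → ℝ) → Fin d → ℝ)
    (D : (Fin d → ℝ) → Fin d → Fin d → ℝ) (q : (Fin d → ℝ) → ℝ) : (Fin d → ℝ) → ℝ :=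
  fun x => -(∑ i, pd i (fun y => f y i * q y) x)
    + (1 / 2) * ∑ i, ∑ j, pd i (pd j (fun y => D y i j * q y)) x

/-- The vector field `bᵢ = (1/2) ∑ⱼ ∂ⱼ Dᵢⱼ - fᵢ`. -/
noncomputable def bvec {d : ℕ} (f : (Fin d → ℝ) → Fin d → ℝ)
    (D : (Fin d → ℝ) → Fin d → Fin d → ℝ) : (Fin d → ℝ) → Fin d → ℝ :=
  fun x i => (1 / 2) * ∑ j, pd j (fun y => D y i j) x - f x i

/-- The divergence `∇·b = ∑ᵢ ∂ᵢ bᵢ` of the vector field `b`. -/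
noncomputable def divb {d : ℕ} (f : (Fin d → ℝ) → Fin d → ℝ)
    (D : (Fin d → ℝ) → Fin d → Fin d → ℝ) : (Fin d → ℝ) → ℝ :=
  fun x => ∑ i, pd i (fun y => bvec f D y i) x

/-- `∫_Ω q² (C_D/C_P - ∇·b) ≤ -2 ∫_Ω (ℒq) q`. -/
theorem stmt_2 {d : ℕ} (hd : 1 ≤ d)
    (Ω : Set (Fin d → ℝ)) (hΩopen : IsOpen Ω) (hΩbdd : Bornology.IsBounded Ω)
    (q : (Fin d → ℝ) → ℝ) (hq : ContDiff ℝ 2 q)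
    (hqsupp : HasCompactSupport q) (hqΩ : tsupport q ⊆ Ω)
    (f : (Fin d → ℝ) → Fin d → ℝ) (hf : ContDiff ℝ 1 f)
    (D : (Fin d → ℝ) → Fin d → Fin d → ℝ) (hD : ContDiff ℝ 2 D)
    (C_D : ℝ) (hCD : 0 < C_D)
    (hell : ∀ x ∈ Ω, ∀ ξ : Fin d → ℝ,
      C_D * ∑ i, (ξ i) ^ 2 ≤ ∑ i, ∑ j, D x i j * ξ i * ξ j)
    (C_P : ℝ) (hCP : 0 < C_P)
    (hpoincare : ∀ u : (Fin d → ℝ) → ℝ, ContDiff ℝ 1 u → HasCompactSupport u →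
      tsupport u ⊆ Ω → ∫ x in Ω, (u x) ^ 2 ≤ C_P * ∫ x in Ω, ∑ i, (pd i u x) ^ 2) :
    ∫ x in Ω, (q x) ^ 2 * (C_D / C_P - divb f D x)
      ≤ -2 * ∫ x in Ω, fokkerPlanck f D q x * q x := by

  -- basic facts about q
  have hq1 : ContDiff ℝ 1 q := hq.of_le one_le_two
  have hqd : Differentiable ℝ q := hq1.differentiable one_ne_zero
  have cq : Continuous q := hq1.continuous
  have cpdq : ∀ i, Continuous (pd i q) := fun i => cont_pd hq1 i
  have hpdqs : ∀ i, HasCompactSupport (pd i q) := fun i => hcs_pd hqsupp i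
  have hnsupp : ∀ {x : Fin d → ℝ}, x ∉ Ω → x ∉ tsupport q := fun {x} hx hm => hx (hqΩ hm)
  have hqz : ∀ {x : Fin d → ℝ}, x ∉ Ω → q x = 0 :=
    fun {x} hx => image_eq_zero_of_notMem_tsupport (hnsupp hx)
  have hpdqz : ∀ (i) {x : Fin d → ℝ}, x ∉ Ω → pd i q x = 0 :=
    fun i {x} hx => pd_eq_zero i (hnsupp hx)
  -- compact support helper
  have hcsq : ∀ {g : (Fin d → ℝ) → ℝ}, (∀ x, x ∉ tsupport q → g x = 0) → HasCompactSupport g :=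
    fun {g} h => hqsupp.mono' (fun x hx => by
      by_contra hm; exact hx (h x hm))
  -- components
  have hfc : ∀ i, ContDiff ℝ 1 (fun y => f y i) := fun i => (contDiff_pi.mp hf) i
  have hDc : ∀ i j, ContDiff ℝ 2 (fun y => D y i j) :=
    fun i j => (contDiff_pi.mp ((contDiff_pi.mp hD) i)) j
  have cpdD : ∀ i j, Continuous (pd j (fun y => D y i j)) :=
    fun i j => cont_pd ((hDc i j).of_le one_le_two) j
  -- F i = f_i q
  have hFc : ∀ i, ContDiff ℝ 1 (fun y => f y i * q y) := fun i => (hfc i).mul hq1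
  have hFcs : ∀ i, HasCompactSupport (fun y => f y i * q y) := fun i => hqsupp.mul_left
  -- G i j = D_ij q
  have hGc : ∀ i j, ContDiff ℝ 2 (fun y => D y i j * q y) := fun i j => (hDc i j).mul hq
  have hGcs : ∀ i j, HasCompactSupport (fun y => D y i j * q y) := fun i j => hqsupp.mul_left
  have hpdGc : ∀ i j, ContDiff ℝ 1 (pd j (fun y => D y i j * q y)) :=
    fun i j => contDiff_pd_one (hGc i j) j
  -- Q = q^2
  set Q : (Fin d → ℝ) → ℝ := fun y => q y * q y with hQdef
  have hQc1 : ContDiff ℝ 1 Q := hq1.mul hq1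
  have hQcs : HasCompactSupport Q := hqsupp.mul_right
  -- b components
  have hbC1 : ∀ i, ContDiff ℝ 1 (fun y => bvec f D y i) := by
    intro i
    have h1 : ContDiff ℝ 1 (fun y => ∑ j, pd j (fun z => D z i j) y) :=
      ContDiff.sum fun j _ => contDiff_pd_one (hDc i j) j
    simp only [bvec]
    exact (contDiff_const.mul h1).sub (hfc i)
  have cdivb : Continuous (divb f D) := by
    have : Continuous (fun x => ∑ i, pd i (fun y => bvec f D y i) x) :=
      continuous_finset_sum _ fun i _ => cont_pd (hbC1 i) i
    exact this
  -- integrability helpers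
  have intmulq : ∀ {h : (Fin d → ℝ) → ℝ}, Continuous h → Integrable (fun x => h x * q x) :=
    fun {h} hc => integrable_ccs (hc.mul cq) hqsupp.mul_left
  have intmulpdq : ∀ {h : (Fin d → ℝ) → ℝ} (i : Fin d), Continuous h →
      Integrable (fun x => h x * pd i q x) :=
    fun {h} i hc => integrable_ccs (hc.mul (cpdq i)) (hpdqs i).mul_left
  -- named integrals
  set A : ℝ := ∫ x, fokkerPlanck f D q x * q x with hAdef
  set a : Fin d → ℝ := fun i => ∫ x, f x i * q x * pd i q x with hadef
  set P : Fin d → Fin d → ℝ :=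
    fun i j => ∫ x, pd j (fun y => D y i j) x * q x * pd i q x with hPdef
  set S : Fin d → Fin d → ℝ :=
    fun i j => ∫ x, D x i j * pd j q x * pd i q x with hSdef
  -- step: A expansion
  have intIq : ∀ i, Integrable (fun x => pd i (fun y => f y i * q y) x * q x) :=
    fun i => intmulq (cont_pd (hFc i) i)
  have intJq : ∀ i j, Integrable (fun x => pd i (pd j (fun y => D y i j * q y)) x * q x) :=
    fun i j => intmulq (cont_pd (hpdGc i j) i)
  have hA : A = -(∑ i, ∫ x, pd i (fun y => f y i * q y) x * q x)
      + (1 / 2) * ∑ i, ∑ j, ∫ x, pd i (pd j (fun y => D y i j * q y)) x * q x := by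
    have e : (fun x => fokkerPlanck f D q x * q x)
        = fun x => (-(∑ i, pd i (fun y => f y i * q y) x * q x))
          + (1 / 2) * (∑ i, ∑ j, pd i (pd j (fun y => D y i j * q y)) x * q x) := by
      funext x
      simp only [fokkerPlanck]
      rw [add_mul, neg_mul, mul_assoc, Finset.sum_mul]
      congr 2
      rw [Finset.sum_mul]
      exact Finset.sum_congr rfl fun i _ => Finset.sum_mul _ _ _
    rw [hAdef, e, integral_add, integral_neg, integral_const_mul _ _,
      integral_finset_sum _ (fun i _ => intIq i),
      integral_finset_sum _ (fun i _ => integrable_finset_sum _ (fun j _ => intJq i j))]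
    · congr 2
      exact Finset.sum_congr rfl fun i _ => integral_finset_sum _ (fun j _ => intJq i j)
    · exact (integrable_finset_sum _ (fun i _ => intIq i)).neg
    · exact (integrable_finset_sum _
        (fun i _ => integrable_finset_sum _ (fun j _ => intJq i j))).const_mul _
  -- step: IBP for first-order term
  have hI : ∀ i, ∫ x, pd i (fun y => f y i * q y) x * q x = -(a i) := by
    intro i
    have h := ibp (hFc i) hq1 (hFcs i) i
    have h2 : ∫ x, (fun y => f y i * q y) x * pd i q x = a i := by
      rw [hadef]
    rw [h2] at h
    linarith
  -- step: IBP for second-order term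
  have hJ : ∀ i j, ∫ x, pd i (pd j (fun y => D y i j * q y)) x * q x = -(P i j) - S i j := by
    intro i j
    have h := ibp (hpdGc i j) hq1 (hcs_pd (hGcs i j) j) i
    have h2 : ∫ x, pd j (fun y => D y i j * q y) x * pd i q x = P i j + S i j := by
      rw [hPdef, hSdef]
      rw [← integral_add (intmulpdq i ((cpdD i j).fun_mul cq))
        (intmulpdq i (((hDc i j).continuous).fun_mul (cpdq j)))]
      congr 1
      funext x
      rw [pd_mul ((hDc i j).differentiable two_ne_zero) hqd j x]
      ring
    rw [h2] at h
    linarith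
  -- step: b-term IBP
  have hibpb : ∀ i, ∫ x, Q x * pd i (fun y => bvec f D y i) x
      = - ∫ x, pd i Q x * bvec f D x i := fun i => ibp hQc1 (hbC1 i) hQcs i
  have hpdQb : ∀ i, ∫ x, pd i Q x * bvec f D x i = (∑ j, P i j) - 2 * a i := by
    intro i
    have hpt : ∀ x, pd i Q x * bvec f D x i
        = (∑ j, pd j (fun y => D y i j) x * q x * pd i q x) - 2 * (f x i * q x * pd i q x) := by
      intro x
      have e : (∑ j, pd j (fun y => D y i j) x * q x * pd i q x)
          = (∑ j, pd j (fun y => D y i j) x) * (q x * pd i q x) := by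
        rw [Finset.sum_mul]
        exact Finset.sum_congr rfl fun j _ => by ring
      have hQd : pd i Q x = pd i q x * q x + q x * pd i q x := pd_mul hqd hqd i x
      rw [e, hQd]
      simp only [bvec]
      ring
    rw [show (fun x => pd i Q x * bvec f D x i)
        = fun x => (∑ j, pd j (fun y => D y i j) x * q x * pd i q x)
          - 2 * (f x i * q x * pd i q x) from funext hpt]
    rw [integral_sub (integrable_finset_sum _
        (fun j _ => intmulpdq i ((cpdD i j).fun_mul cq)))
      ((intmulpdq i ((hfc i).continuous.fun_mul cq)).const_mul 2),
      integral_finset_sum _ (fun j _ => intmulpdq i ((cpdD i j).fun_mul cq)),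
      integral_const_mul _ _]
  -- divergence assembly
  have hdiv : ∫ x, Q x * divb f D x = ∑ i, ∫ x, Q x * pd i (fun y => bvec f D y i) x := by
    rw [show (fun x => Q x * divb f D x)
        = fun x => ∑ i, Q x * pd i (fun y => bvec f D y i) x from
      funext fun x => by simp only [divb]; rw [Finset.mul_sum]]
    exact integral_finset_sum _ fun i _ =>
      integrable_ccs (hQc1.continuous.mul (cont_pd (hbC1 i) i)) hQcs.mul_right
  have hQdiv : ∫ x, Q x * divb f D x = - ∑ i, ((∑ j, P i j) - 2 * a i) := by
    rw [hdiv]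
    rw [Finset.sum_congr rfl fun i _ => hibpb i]
    rw [Finset.sum_congr rfl fun i _ => congrArg Neg.neg (hpdQb i)]
    rw [← Finset.sum_neg_distrib]
  -- key identity
  have key : -2 * A = -(∫ x, Q x * divb f D x) + ∑ i, ∑ j, S i j := by
    rw [hA, hQdiv]
    rw [Finset.sum_congr rfl fun i _ => hI i]
    rw [Finset.sum_congr rfl fun i _ => (Finset.sum_congr rfl fun j _ => hJ i j)]
    simp only [Finset.sum_neg_distrib, Finset.sum_sub_distrib, ← Finset.mul_sum]
    ring
  -- RHS conversion
  have hRHS : ∫ x in Ω, fokkerPlanck f D q x * q x = A := by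
    exact setIntegral_eq_integral_of_forall_compl_eq_zero fun x hx => by
      simp [hqz hx]
  -- now the inequality
  have hq2Q : ∀ x, (q x) ^ 2 = Q x := fun x => by simp [hQdef, pow_two]
  -- integrable pieces on Ω
  have intQdiv : Integrable (fun x => Q x * divb f D x) :=
    integrable_ccs (hQc1.continuous.mul cdivb) hQcs.mul_right
  have intQ : Integrable Q := integrable_ccs hQc1.continuous hQcs
  have hsetQdiv : ∫ x in Ω, Q x * divb f D x = ∫ x, Q x * divb f D x :=
    setIntegral_eq_integral_of_forall_compl_eq_zero fun x hx => by
      simp [hQdef, hqz hx]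
  -- sum of squares of gradient
  have intgrad : Integrable (fun x => ∑ i, (pd i q x) ^ 2) := by
    refine integrable_ccs (continuous_finset_sum _ fun i _ => (cpdq i).pow 2) (hcsq ?_)
    intro x hx
    have : ∀ i, pd i q x = 0 := fun i => pd_eq_zero i hx
    simp [this]
  have intDgrad : Integrable (fun x => ∑ i, ∑ j, D x i j * pd i q x * pd j q x) := by
    refine integrable_ccs (continuous_finset_sum _ fun i _ =>
      continuous_finset_sum _ fun j _ =>
        (((hDc i j).continuous.mul (cpdq i)).mul (cpdq j))) (hcsq ?_)
    intro x hx
    have : ∀ i, pd i q x = 0 := fun i => pd_eq_zero i hx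
    simp [this]
  have hDgradset : ∫ x in Ω, ∑ i, ∑ j, D x i j * pd i q x * pd j q x
      = ∑ i, ∑ j, S i j := by
    rw [setIntegral_eq_integral_of_forall_compl_eq_zero (fun x hx => by
      have : ∀ i, pd i q x = 0 := fun i => hpdqz i hx
      simp [this])]
    rw [integral_finset_sum _ (fun i _ => integrable_finset_sum _ fun j _ =>
      integrable_ccs (((hDc i j).continuous.fun_mul (cpdq i)).fun_mul (cpdq j))
        ((hpdqs i).mul_left.mul_right))]
    refine Finset.sum_congr rfl fun i _ => ?_
    rw [integral_finset_sum _ (fun j _ =>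
      integrable_ccs (((hDc i j).continuous.fun_mul (cpdq i)).fun_mul (cpdq j))
        ((hpdqs i).mul_left.mul_right))]
    refine Finset.sum_congr rfl fun j _ => ?_
    rw [hSdef]
    congr 1
    funext x
    ring
  -- LHS split
  have hLHS : ∫ x in Ω, (q x) ^ 2 * (C_D / C_P - divb f D x)
      = (C_D / C_P) * (∫ x in Ω, (q x) ^ 2) - ∫ x, Q x * divb f D x := by
    have e : (fun x => (q x) ^ 2 * (C_D / C_P - divb f D x))
        = fun x => (C_D / C_P) * (q x) ^ 2 - Q x * divb f D x := by
      funext x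
      rw [← hq2Q x]
      ring
    rw [e, integral_sub, integral_const_mul _ _, hsetQdiv]
    · exact ((integrable_ccs (cq.pow 2) (by
        refine hcsq ?_
        intro x hx
        simp [image_eq_zero_of_notMem_tsupport hx])).const_mul _).integrableOn
    · exact intQdiv.integrableOn
  rw [hLHS, hRHS, key]
  have hQint : ∫ x in Ω, (q x) ^ 2 = ∫ x in Ω, Q x := by
    refine setIntegral_congr_fun hΩopen.measurableSet fun x _ => hq2Q x
  -- Poincare step
  have hpoin := hpoincare q hq1 hqsupp hqΩ
  have step1 : (C_D / C_P) * (∫ x in Ω, (q x) ^ 2) ≤ C_D * ∫ x in Ω, ∑ i, (pd i q x) ^ 2 := by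
    calc (C_D / C_P) * (∫ x in Ω, (q x) ^ 2)
        ≤ (C_D / C_P) * (C_P * ∫ x in Ω, ∑ i, (pd i q x) ^ 2) :=
          mul_le_mul_of_nonneg_left hpoin (div_nonneg hCD.le hCP.le)
      _ = C_D * ∫ x in Ω, ∑ i, (pd i q x) ^ 2 := by
          field_simp
  -- ellipticity step
  have step2 : C_D * ∫ x in Ω, ∑ i, (pd i q x) ^ 2
      ≤ ∑ i, ∑ j, S i j := by
    rw [← hDgradset, ← integral_const_mul _ _]
    refine setIntegral_mono_on ((intgrad.const_mul _).integrableOn)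
      (intDgrad.integrableOn) hΩopen.measurableSet fun x hx => ?_
    exact hell x hx (fun i => pd i q x)
  linarith [step1, step2]
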